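/- Let X be a normed space, Y a normed space, B : X → Y bounded linear, γ > 0, and ξ ∈ X* with |⟨ξ, x⟩| ≤ γ‖Bx‖ for all x ∈ X. Then there exists η ∈ Y* with ‖η‖ ≤ γ and ξ = B* η. -/

import Mathlib

noncomputable section

/-- If `|⟨ξ, x⟩| ≤ γ ‖B x‖` for all `x`, then `ξ = B* η` for some `η ∈ Y*` with
`‖η‖ ≤ γ` (a Hahn–Banach consequence). -/
theorem stmt10 {X Y : Type*} [NormedAddCommGroup X] [NormedSpace ℝ X]
    [NormedAddCommGroup Y] [NormedSpace ℝ Y]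
    (B : X →L[ℝ] Y) (γ : ℝ) (hγ : 0 < γ) (ξ : StrongDual ℝ X)
    (h : ∀ x : X, |ξ x| ≤ γ * ‖B x‖) :
    ∃ η : StrongDual ℝ Y, ‖η‖ ≤ γ ∧ ∀ x : X, ξ x = η (B x) := by
  set p : Submodule ℝ Y := LinearMap.range (B : X →ₗ[ℝ] Y) with hp
  have hker : LinearMap.ker (B : X →ₗ[ℝ] Y) ≤ LinearMap.ker (ξ : X →ₗ[ℝ] ℝ) := by
    intro x hx
    have hBx : B x = 0 := hx
    have := h x
    rw [hBx, norm_zero, mul_zero] at this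
    have h0 : |ξ x| ≤ 0 := this
    have : ξ x = 0 := abs_eq_zero.mp (le_antisymm h0 (abs_nonneg _))
    simpa [LinearMap.mem_ker] using this
  let e := LinearMap.quotKerEquivRange (B : X →ₗ[ℝ] Y)
  let g : p →ₗ[ℝ] ℝ :=
    ((LinearMap.ker (B : X →ₗ[ℝ] Y)).liftQ (ξ : X →ₗ[ℝ] ℝ) hker).comp
      (e.symm : p →ₗ[ℝ] _)
  have hg : ∀ x : X, g ⟨B x, LinearMap.mem_range_self _ x⟩ = ξ x := by
    intro x
    have he : e (Submodule.Quotient.mk x) = ⟨B x, LinearMap.mem_range_self _ x⟩ := by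
      apply Subtype.ext
      simp [e, LinearMap.quotKerEquivRange]
    have : e.symm ⟨B x, LinearMap.mem_range_self _ x⟩ = Submodule.Quotient.mk x := by
      rw [← he, LinearEquiv.symm_apply_apply]
    simp [g, this]
  have hbound : ∀ y : p, ‖g y‖ ≤ γ * ‖y‖ := by
    rintro ⟨y, hy⟩
    obtain ⟨x, rfl⟩ := hy
    have := hg x
    simp only [ContinuousLinearMap.coe_coe] at this ⊢
    rw [this]
    simpa using h x
  let f : p →L[ℝ] ℝ := LinearMap.mkContinuous g γ hbound
  obtain ⟨η, hη1, hη2⟩ := exists_extension_norm_eq p f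
  refine ⟨η, ?_, ?_⟩
  · rw [hη2]
    exact LinearMap.mkContinuous_norm_le g hγ.le hbound
  · intro x
    have := hη1 ⟨B x, LinearMap.mem_range_self _ x⟩
    rw [← hg x]
    exact (this.trans (by rfl)).symm
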